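/- A pair (x, y) is an AE solution of the general interval system 𝐀x + 𝐁y = 𝐚, 𝐂x + 𝐃y ≤ 𝐛, x ≥ 0 if and only if x ≥ 0 and |A_c x + B_c y − a_c| ≤ (A∃_Δ − A∀_Δ)x + (B∃_Δ − B∀_Δ)|y| + a∃_Δ − a∀_Δ and C_c x + D_c y − b_c ≤ (C∃_Δ − C∀_Δ)x + (D∃_Δ − D∀_Δ)|y| + b∃_Δ − b∀_Δ. -/

import Mathlib

lemma sum_abs_le' {n : ℕ} (u v : Fin n → ℝ) (h : ∀ j, |u j| ≤ v j) :
    |∑ j, u j| ≤ ∑ j, v j :=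
  (Finset.abs_sum_le_sum_abs _ _).trans (Finset.sum_le_sum fun j _ => h j)

/-- `(x,y)` is an AE solution of the general interval system
`𝐀x + 𝐁y = 𝐚, 𝐂x + 𝐃y ≤ 𝐛, x ≥ 0`. -/
def IsAESolGen {m n m' n' : ℕ}
    (Afc AfΔ Aec AeΔ : Matrix (Fin m) (Fin n) ℝ)
    (Bfc BfΔ Bec BeΔ : Matrix (Fin m) (Fin n') ℝ)
    (Cfc CfΔ Cec CeΔ : Matrix (Fin m') (Fin n) ℝ)
    (Dfc DfΔ Dec DeΔ : Matrix (Fin m') (Fin n') ℝ)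
    (afc afΔ aec aeΔ : Fin m → ℝ)
    (bfc bfΔ bec beΔ : Fin m' → ℝ)
    (x : Fin n → ℝ) (y : Fin n' → ℝ) : Prop :=
  ∀ Af : Matrix (Fin m) (Fin n) ℝ, (∀ i j, |Af i j - Afc i j| ≤ AfΔ i j) →
  ∀ Bf : Matrix (Fin m) (Fin n') ℝ, (∀ i j, |Bf i j - Bfc i j| ≤ BfΔ i j) →
  ∀ Cf : Matrix (Fin m') (Fin n) ℝ, (∀ i j, |Cf i j - Cfc i j| ≤ CfΔ i j) →
  ∀ Df : Matrix (Fin m') (Fin n') ℝ, (∀ i j, |Df i j - Dfc i j| ≤ DfΔ i j) →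
  ∀ af : Fin m → ℝ, (∀ i, |af i - afc i| ≤ afΔ i) →
  ∀ bf : Fin m' → ℝ, (∀ i, |bf i - bfc i| ≤ bfΔ i) →
  ∃ Ae : Matrix (Fin m) (Fin n) ℝ, (∀ i j, |Ae i j - Aec i j| ≤ AeΔ i j) ∧
  ∃ Be : Matrix (Fin m) (Fin n') ℝ, (∀ i j, |Be i j - Bec i j| ≤ BeΔ i j) ∧
  ∃ Ce : Matrix (Fin m') (Fin n) ℝ, (∀ i j, |Ce i j - Cec i j| ≤ CeΔ i j) ∧
  ∃ De : Matrix (Fin m') (Fin n') ℝ, (∀ i j, |De i j - Dec i j| ≤ DeΔ i j) ∧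
  ∃ ae : Fin m → ℝ, (∀ i, |ae i - aec i| ≤ aeΔ i) ∧
  ∃ be : Fin m' → ℝ, (∀ i, |be i - bec i| ≤ beΔ i) ∧
    ((Af + Ae).mulVec x + (Bf + Be).mulVec y = af + ae) ∧
    (∀ i, ((Cf + Ce).mulVec x) i + ((Df + De).mulVec y) i ≤ bf i + be i) ∧
    (∀ j, 0 ≤ x j)

/-- Characterization of AE solutions to the general interval system. -/
theorem ae_solution_general_iff {m n m' n' : ℕ}
    (Afc AfΔ Aec AeΔ : Matrix (Fin m) (Fin n) ℝ)
    (Bfc BfΔ Bec BeΔ : Matrix (Fin m) (Fin n') ℝ)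
    (Cfc CfΔ Cec CeΔ : Matrix (Fin m') (Fin n) ℝ)
    (Dfc DfΔ Dec DeΔ : Matrix (Fin m') (Fin n') ℝ)
    (afc afΔ aec aeΔ : Fin m → ℝ)
    (bfc bfΔ bec beΔ : Fin m' → ℝ)
    (hAfΔ : ∀ i j, 0 ≤ AfΔ i j) (hAeΔ : ∀ i j, 0 ≤ AeΔ i j)
    (hBfΔ : ∀ i j, 0 ≤ BfΔ i j) (hBeΔ : ∀ i j, 0 ≤ BeΔ i j)
    (hCfΔ : ∀ i j, 0 ≤ CfΔ i j) (hCeΔ : ∀ i j, 0 ≤ CeΔ i j)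
    (hDfΔ : ∀ i j, 0 ≤ DfΔ i j) (hDeΔ : ∀ i j, 0 ≤ DeΔ i j)
    (hafΔ : ∀ i, 0 ≤ afΔ i) (haeΔ : ∀ i, 0 ≤ aeΔ i)
    (hbfΔ : ∀ i, 0 ≤ bfΔ i) (hbeΔ : ∀ i, 0 ≤ beΔ i)
    (x : Fin n → ℝ) (y : Fin n' → ℝ) :
    IsAESolGen Afc AfΔ Aec AeΔ Bfc BfΔ Bec BeΔ Cfc CfΔ Cec CeΔ
      Dfc DfΔ Dec DeΔ afc afΔ aec aeΔ bfc bfΔ bec beΔ x y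
    ↔
    ((∀ j, 0 ≤ x j) ∧
     (∀ i, |((Afc + Aec).mulVec x) i + ((Bfc + Bec).mulVec y) i - (afc i + aec i)| ≤
        ((AeΔ - AfΔ).mulVec x) i + ((BeΔ - BfΔ).mulVec (fun j => |y j|)) i
          + (aeΔ i - afΔ i)) ∧
     (∀ i, ((Cfc + Cec).mulVec x) i + ((Dfc + Dec).mulVec y) i - (bfc i + bec i) ≤
        ((CeΔ - CfΔ).mulVec x) i + ((DeΔ - DfΔ).mulVec (fun j => |y j|)) i
          + (beΔ i - bfΔ i))) := by
  obtain ⟨σ, hσy, hσ1⟩ : ∃ σ : Fin n' → ℝ, (∀ j, σ j * y j = |y j|) ∧ (∀ j, |σ j| = 1) := by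
    refine ⟨fun j => if y j < 0 then -1 else 1, fun j => ?_, fun j => ?_⟩
    · show (if y j < 0 then (-1:ℝ) else 1) * y j = |y j|
      by_cases hj : y j < 0
      · rw [if_pos hj, abs_of_neg hj]; ring
      · rw [if_neg hj, abs_of_nonneg (not_lt.mp hj)]; ring
    · show |if y j < 0 then (-1:ℝ) else 1| = 1
      by_cases hj : y j < 0 <;> simp [hj]
  -- conversions of the characterization sides to explicit sums
  have hL : ∀ i, ((Afc + Aec).mulVec x) i + ((Bfc + Bec).mulVec y) i - (afc i + aec i)
      = ((∑ j, Afc i j * x j) + (∑ j, Aec i j * x j))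
        + ((∑ j, Bfc i j * y j) + (∑ j, Bec i j * y j)) - (afc i + aec i) := by
    intro i
    simp only [Matrix.mulVec, dotProduct, Matrix.add_apply, Pi.add_apply, add_mul,
      Finset.sum_add_distrib]
  have hR : ∀ i, ((AeΔ - AfΔ).mulVec x) i + ((BeΔ - BfΔ).mulVec (fun j => |y j|)) i
        + (aeΔ i - afΔ i)
      = ((∑ j, AeΔ i j * x j) - (∑ j, AfΔ i j * x j))
        + ((∑ j, BeΔ i j * |y j|) - (∑ j, BfΔ i j * |y j|)) + (aeΔ i - afΔ i) := by
    intro i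
    simp only [Matrix.mulVec, dotProduct, Matrix.sub_apply, Pi.sub_apply, sub_mul,
      Finset.sum_sub_distrib]
  have hL2 : ∀ i, ((Cfc + Cec).mulVec x) i + ((Dfc + Dec).mulVec y) i - (bfc i + bec i)
      = ((∑ j, Cfc i j * x j) + (∑ j, Cec i j * x j))
        + ((∑ j, Dfc i j * y j) + (∑ j, Dec i j * y j)) - (bfc i + bec i) := by
    intro i
    simp only [Matrix.mulVec, dotProduct, Matrix.add_apply, Pi.add_apply, add_mul,
      Finset.sum_add_distrib]
  have hR2 : ∀ i, ((CeΔ - CfΔ).mulVec x) i + ((DeΔ - DfΔ).mulVec (fun j => |y j|)) i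
        + (beΔ i - bfΔ i)
      = ((∑ j, CeΔ i j * x j) - (∑ j, CfΔ i j * x j))
        + ((∑ j, DeΔ i j * |y j|) - (∑ j, DfΔ i j * |y j|)) + (beΔ i - bfΔ i) := by
    intro i
    simp only [Matrix.mulVec, dotProduct, Matrix.sub_apply, Pi.sub_apply, sub_mul,
      Finset.sum_sub_distrib]
  constructor
  · -- forward direction
    intro h
    obtain ⟨s, hs⟩ : ∃ s : Fin m → ℝ, ∀ i,
        (s i = 1 ∧ 0 ≤ ((Afc + Aec).mulVec x) i + ((Bfc + Bec).mulVec y) i - (afc i + aec i))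
        ∨ (s i = -1 ∧ ((Afc + Aec).mulVec x) i + ((Bfc + Bec).mulVec y) i - (afc i + aec i) < 0) := by
      refine ⟨fun i => if ((Afc + Aec).mulVec x) i + ((Bfc + Bec).mulVec y) i - (afc i + aec i) < 0
        then -1 else 1, fun i => ?_⟩
      by_cases hi : ((Afc + Aec).mulVec x) i + ((Bfc + Bec).mulVec y) i - (afc i + aec i) < 0
      · exact Or.inr ⟨if_pos hi, hi⟩
      · exact Or.inl ⟨if_neg hi, not_lt.mp hi⟩
    have hs1 : ∀ i, |s i| = 1 := by
      intro i; rcases hs i with ⟨h1, _⟩ | ⟨h1, _⟩ <;> rw [h1] <;> simp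
    obtain ⟨Ae, hAe, Be, hBe, Ce, hCe, De, hDe, ae, hae, be, hbe, heq, hineq, hx⟩ :=
      h (fun i j => Afc i j + s i * AfΔ i j)
        (fun i j => by
          have ha : Afc i j + s i * AfΔ i j - Afc i j = s i * AfΔ i j := by ring
          rw [ha, abs_mul, hs1 i, one_mul, abs_of_nonneg (hAfΔ i j)])
        (fun i j => Bfc i j + s i * BfΔ i j * σ j)
        (fun i j => by
          have ha : Bfc i j + s i * BfΔ i j * σ j - Bfc i j = s i * BfΔ i j * σ j := by ring
          rw [ha, abs_mul, abs_mul, hs1 i, hσ1 j, one_mul, mul_one,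
            abs_of_nonneg (hBfΔ i j)])
        (fun i j => Cfc i j + CfΔ i j)
        (fun i j => by
          have ha : Cfc i j + CfΔ i j - Cfc i j = CfΔ i j := by ring
          rw [ha, abs_of_nonneg (hCfΔ i j)])
        (fun i j => Dfc i j + DfΔ i j * σ j)
        (fun i j => by
          have ha : Dfc i j + DfΔ i j * σ j - Dfc i j = DfΔ i j * σ j := by ring
          rw [ha, abs_mul, hσ1 j, mul_one, abs_of_nonneg (hDfΔ i j)])
        (fun i => afc i - s i * afΔ i)
        (fun i => by
          have ha : afc i - s i * afΔ i - afc i = -(s i * afΔ i) := by ring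
          rw [ha, abs_neg, abs_mul, hs1 i, one_mul, abs_of_nonneg (hafΔ i)])
        (fun i => bfc i - bfΔ i)
        (fun i => by
          have ha : bfc i - bfΔ i - bfc i = -(bfΔ i) := by ring
          rw [ha, abs_neg, abs_of_nonneg (hbfΔ i)])
    refine ⟨hx, ?_, ?_⟩
    · -- equality characterization
      intro i
      have heqi := congrFun heq i
      simp only [Pi.add_apply, Matrix.mulVec, dotProduct, Matrix.add_apply] at heqi
      have E1 : (∑ j, (Afc i j + s i * AfΔ i j + Ae i j) * x j)
          = (∑ j, Afc i j * x j) + s i * (∑ j, AfΔ i j * x j)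
            + ((∑ j, Aec i j * x j) + ∑ j, (Ae i j - Aec i j) * x j) := by
        simp only [Finset.mul_sum, ← Finset.sum_add_distrib]
        exact Finset.sum_congr rfl fun j _ => by ring
      have E2 : (∑ j, (Bfc i j + s i * BfΔ i j * σ j + Be i j) * y j)
          = (∑ j, Bfc i j * y j) + s i * (∑ j, BfΔ i j * |y j|)
            + ((∑ j, Bec i j * y j) + ∑ j, (Be i j - Bec i j) * y j) := by
        simp only [Finset.mul_sum, ← Finset.sum_add_distrib]
        refine Finset.sum_congr rfl fun j _ => ?_
        rw [← hσy j]; ring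
      change (∑ j, (Afc i j + s i * AfΔ i j + Ae i j) * x j) + (∑ j, (Bfc i j + s i * BfΔ i j * σ j + Be i j) * y j) = afc i - s i * afΔ i + ae i at heqi
      rw [E1, E2] at heqi
      have bEA := abs_le.mp (sum_abs_le' (fun j => (Ae i j - Aec i j) * x j)
        (fun j => AeΔ i j * x j) (fun j => by
          rw [abs_mul, abs_of_nonneg (hx j)]
          exact mul_le_mul_of_nonneg_right (hAe i j) (hx j)))
      have bEB := abs_le.mp (sum_abs_le' (fun j => (Be i j - Bec i j) * y j)
        (fun j => BeΔ i j * |y j|) (fun j => by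
          rw [abs_mul]
          exact mul_le_mul_of_nonneg_right (hBe i j) (abs_nonneg _)))
      have bae := abs_le.mp (hae i)
      rw [hR i]
      rcases hs i with ⟨h1, hpos⟩ | ⟨h1, hneg⟩
      · rw [h1] at heqi
        rw [abs_of_nonneg hpos, hL i]
        linarith [bEA.1, bEA.2, bEB.1, bEB.2, bae.1, bae.2]
      · rw [h1] at heqi
        rw [abs_of_neg hneg, hL i]
        linarith [bEA.1, bEA.2, bEB.1, bEB.2, bae.1, bae.2]
    · -- inequality characterization
      intro i
      have hineqi := hineq i
      simp only [Matrix.mulVec, dotProduct, Matrix.add_apply] at hineqi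
      have E3 : (∑ j, (Cfc i j + CfΔ i j + Ce i j) * x j)
          = (∑ j, Cfc i j * x j) + (∑ j, CfΔ i j * x j)
            + ((∑ j, Cec i j * x j) + ∑ j, (Ce i j - Cec i j) * x j) := by
        simp only [← Finset.sum_add_distrib]
        exact Finset.sum_congr rfl fun j _ => by ring
      have E4 : (∑ j, (Dfc i j + DfΔ i j * σ j + De i j) * y j)
          = (∑ j, Dfc i j * y j) + (∑ j, DfΔ i j * |y j|)
            + ((∑ j, Dec i j * y j) + ∑ j, (De i j - Dec i j) * y j) := by
        simp only [← Finset.sum_add_distrib]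
        refine Finset.sum_congr rfl fun j _ => ?_
        rw [← hσy j]; ring
      change (∑ j, (Cfc i j + CfΔ i j + Ce i j) * x j) + (∑ j, (Dfc i j + DfΔ i j * σ j + De i j) * y j) ≤ bfc i - bfΔ i + be i at hineqi
      rw [E3, E4] at hineqi
      have bEC := abs_le.mp (sum_abs_le' (fun j => (Ce i j - Cec i j) * x j)
        (fun j => CeΔ i j * x j) (fun j => by
          rw [abs_mul, abs_of_nonneg (hx j)]
          exact mul_le_mul_of_nonneg_right (hCe i j) (hx j)))
      have bED := abs_le.mp (sum_abs_le' (fun j => (De i j - Dec i j) * y j)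
        (fun j => DeΔ i j * |y j|) (fun j => by
          rw [abs_mul]
          exact mul_le_mul_of_nonneg_right (hDe i j) (abs_nonneg _)))
      have bbe := abs_le.mp (hbe i)
      rw [hL2 i, hR2 i]
      linarith [bEC.1, bEC.2, bED.1, bED.2, bbe.1, bbe.2]
  · -- backward direction
    rintro ⟨hx, h1, h2⟩ Af hAf Bf hBf Cf hCf Df hDf af haf bf hbf
    -- residual and its bound
    set e : Fin m → ℝ := fun i =>
      ((∑ j, Af i j * x j) + (∑ j, Aec i j * x j))
        + ((∑ j, Bf i j * y j) + (∑ j, Bec i j * y j)) - (af i + aec i) with he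
    set d : Fin m → ℝ := fun i =>
      (∑ j, AeΔ i j * x j) + (∑ j, BeΔ i j * |y j|) + aeΔ i with hd
    have hd0 : ∀ i, 0 ≤ d i := by
      intro i
      have p1 : (0:ℝ) ≤ ∑ j, AeΔ i j * x j :=
        Finset.sum_nonneg fun j _ => mul_nonneg (hAeΔ i j) (hx j)
      have p2 : (0:ℝ) ≤ ∑ j, BeΔ i j * |y j| :=
        Finset.sum_nonneg fun j _ => mul_nonneg (hBeΔ i j) (abs_nonneg _)
      have := haeΔ i
      simp only [hd]; linarith
    have hed : ∀ i, |e i| ≤ d i := by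
      intro i
      have hc := h1 i
      rw [hL i, hR i] at hc
      have hc' := abs_le.mp hc
      have bF := abs_le.mp (sum_abs_le' (fun j => (Af i j - Afc i j) * x j)
        (fun j => AfΔ i j * x j) (fun j => by
          rw [abs_mul, abs_of_nonneg (hx j)]
          exact mul_le_mul_of_nonneg_right (hAf i j) (hx j)))
      have bG := abs_le.mp (sum_abs_le' (fun j => (Bf i j - Bfc i j) * y j)
        (fun j => BfΔ i j * |y j|) (fun j => by
          rw [abs_mul]
          exact mul_le_mul_of_nonneg_right (hBf i j) (abs_nonneg _)))
      have bH := abs_le.mp (haf i)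
      have dF : (∑ j, Af i j * x j)
          = (∑ j, Afc i j * x j) + ∑ j, (Af i j - Afc i j) * x j := by
        rw [← Finset.sum_add_distrib]
        exact Finset.sum_congr rfl fun j _ => by ring
      have dG : (∑ j, Bf i j * y j)
          = (∑ j, Bfc i j * y j) + ∑ j, (Bf i j - Bfc i j) * y j := by
        rw [← Finset.sum_add_distrib]
        exact Finset.sum_congr rfl fun j _ => by ring
      simp only [he, hd]
      rw [abs_le]
      constructor <;> linarith [bF.1, bF.2, bG.1, bG.2, bH.1, bH.2, hc'.1, hc'.2]
    set t : Fin m → ℝ := fun i => if d i = 0 then 0 else e i / d i with ht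
    have htd : ∀ i, t i * d i = e i := by
      intro i
      by_cases hdi : d i = 0
      · have h0 : e i = 0 := by
          have := hed i
          rw [hdi] at this
          exact abs_nonpos_iff.mp this
        simp [ht, hdi, h0]
      · simp only [ht, if_neg hdi]
        field_simp
    have ht1 : ∀ i, |t i| ≤ 1 := by
      intro i
      by_cases hdi : d i = 0
      · simp [ht, hdi]
      · have hdp : 0 < d i := lt_of_le_of_ne (hd0 i) (Ne.symm hdi)
        simp only [ht, if_neg hdi, abs_div, abs_of_pos hdp]
        exact (div_le_one hdp).mpr (hed i)
    refine ⟨fun i j => Aec i j - t i * AeΔ i j, fun i j => ?_,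
            fun i j => Bec i j - t i * BeΔ i j * σ j, fun i j => ?_,
            fun i j => Cec i j - CeΔ i j, fun i j => ?_,
            fun i j => Dec i j - DeΔ i j * σ j, fun i j => ?_,
            fun i => aec i + t i * aeΔ i, fun i => ?_,
            fun i => bec i + beΔ i, fun i => ?_,
            ?_, ?_, hx⟩
    · have ha : Aec i j - t i * AeΔ i j - Aec i j = -(t i * AeΔ i j) := by ring
      rw [ha, abs_neg, abs_mul, abs_of_nonneg (hAeΔ i j)]
      exact mul_le_of_le_one_left (hAeΔ i j) (ht1 i)
    · have ha : Bec i j - t i * BeΔ i j * σ j - Bec i j = -(t i * BeΔ i j * σ j) := by ring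
      rw [ha, abs_neg, abs_mul, hσ1 j, mul_one, abs_mul, abs_of_nonneg (hBeΔ i j)]
      exact mul_le_of_le_one_left (hBeΔ i j) (ht1 i)
    · have ha : Cec i j - CeΔ i j - Cec i j = -(CeΔ i j) := by ring
      exact le_of_eq (by rw [ha, abs_neg, abs_of_nonneg (hCeΔ i j)])
    · have ha : Dec i j - DeΔ i j * σ j - Dec i j = -(DeΔ i j * σ j) := by ring
      exact le_of_eq (by rw [ha, abs_neg, abs_mul, hσ1 j, mul_one, abs_of_nonneg (hDeΔ i j)])
    · have ha : aec i + t i * aeΔ i - aec i = t i * aeΔ i := by ring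
      rw [ha, abs_mul, abs_of_nonneg (haeΔ i)]
      exact mul_le_of_le_one_left (haeΔ i) (ht1 i)
    · have ha : bec i + beΔ i - bec i = beΔ i := by ring
      exact le_of_eq (by rw [ha, abs_of_nonneg (hbeΔ i)])
    · -- equality system
      funext i
      simp only [Pi.add_apply, Matrix.mulVec, dotProduct, Matrix.add_apply]
      have E1 : (∑ j, (Af i j + (Aec i j - t i * AeΔ i j)) * x j)
          = (∑ j, Af i j * x j) + (∑ j, Aec i j * x j) - t i * (∑ j, AeΔ i j * x j) := by
        simp only [Finset.mul_sum, ← Finset.sum_add_distrib, ← Finset.sum_sub_distrib]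
        exact Finset.sum_congr rfl fun j _ => by ring
      have E2 : (∑ j, (Bf i j + (Bec i j - t i * BeΔ i j * σ j)) * y j)
          = (∑ j, Bf i j * y j) + (∑ j, Bec i j * y j) - t i * (∑ j, BeΔ i j * |y j|) := by
        simp only [Finset.mul_sum, ← Finset.sum_add_distrib, ← Finset.sum_sub_distrib]
        refine Finset.sum_congr rfl fun j _ => ?_
        rw [← hσy j]; ring
      change (∑ j, (Af i j + (Aec i j - t i * AeΔ i j)) * x j) + (∑ j, (Bf i j + (Bec i j - t i * BeΔ i j * σ j)) * y j) = af i + (aec i + t i * aeΔ i)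
      rw [E1, E2]
      have hkey := htd i
      simp only [hd, he] at hkey
      linear_combination -hkey
    · -- inequality system
      intro i
      simp only [Matrix.mulVec, dotProduct, Matrix.add_apply]
      have E3 : (∑ j, (Cf i j + (Cec i j - CeΔ i j)) * x j)
          = (∑ j, Cf i j * x j) + (∑ j, Cec i j * x j) - (∑ j, CeΔ i j * x j) := by
        simp only [← Finset.sum_add_distrib, ← Finset.sum_sub_distrib]
        exact Finset.sum_congr rfl fun j _ => by ring
      have E4 : (∑ j, (Df i j + (Dec i j - DeΔ i j * σ j)) * y j)
          = (∑ j, Df i j * y j) + (∑ j, Dec i j * y j) - (∑ j, DeΔ i j * |y j|) := by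
        simp only [← Finset.sum_add_distrib, ← Finset.sum_sub_distrib]
        refine Finset.sum_congr rfl fun j _ => ?_
        rw [← hσy j]; ring
      change (∑ j, (Cf i j + (Cec i j - CeΔ i j)) * x j) + (∑ j, (Df i j + (Dec i j - DeΔ i j * σ j)) * y j) ≤ bf i + (bec i + beΔ i)
      rw [E3, E4]
      have uC : (∑ j, Cf i j * x j) ≤ (∑ j, Cfc i j * x j) + ∑ j, CfΔ i j * x j := by
        rw [← Finset.sum_add_distrib]
        refine Finset.sum_le_sum fun j _ => ?_
        have hb := (abs_le.mp (hCf i j)).2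
        calc Cf i j * x j ≤ (Cfc i j + CfΔ i j) * x j :=
              mul_le_mul_of_nonneg_right (by linarith) (hx j)
          _ = Cfc i j * x j + CfΔ i j * x j := by ring
      have uD : (∑ j, Df i j * y j) ≤ (∑ j, Dfc i j * y j) + ∑ j, DfΔ i j * |y j| := by
        rw [← Finset.sum_add_distrib]
        refine Finset.sum_le_sum fun j _ => ?_
        have h1 : (Df i j - Dfc i j) * y j ≤ DfΔ i j * |y j| := by
          calc (Df i j - Dfc i j) * y j ≤ |(Df i j - Dfc i j) * y j| := le_abs_self _
          _ = |Df i j - Dfc i j| * |y j| := abs_mul _ _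
          _ ≤ DfΔ i j * |y j| := mul_le_mul_of_nonneg_right (hDf i j) (abs_nonneg _)
        have h2 : Df i j * y j = Dfc i j * y j + (Df i j - Dfc i j) * y j := by ring
        rw [h2]; linarith
      have ub := (abs_le.mp (hbf i)).1
      have hC := h2 i
      rw [hL2 i, hR2 i] at hC
      linarith [uC, uD, ub, hC]
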